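/- The metric ρ(x,y) = ‖x − y‖ on 𝔸_f induces the restricted product topology, and (𝔸_f, ρ) is a complete non-Archimedean metric space. -/

import Mathlib

open Filter MeasureTheory
open scoped Classical

noncomputable section

instance (p : Nat.Primes) : Fact (p.1.Prime) := ⟨p.2⟩

/-- The finite adele ring of `ℚ`, realized as the restricted product of the
fields `ℚ_[p]` with respect to the rings `ℤ_[p]`. -/
def adeleSubring : Subring (Π p : Nat.Primes, ℚ_[p.1]) where
  carrier := {x | ∀ᶠ p : Nat.Primes in Filter.cofinite, ‖x p‖ ≤ 1}
  zero_mem' := by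
    show ∀ᶠ p : Nat.Primes in Filter.cofinite, ‖(0 : Π p : Nat.Primes, ℚ_[p.1]) p‖ ≤ 1
    exact Filter.Eventually.of_forall fun p => by simp
  one_mem' := by
    show ∀ᶠ p : Nat.Primes in Filter.cofinite, ‖(1 : Π p : Nat.Primes, ℚ_[p.1]) p‖ ≤ 1
    exact Filter.Eventually.of_forall fun p => by simp
  add_mem' := by
    intro a b ha hb
    show ∀ᶠ p : Nat.Primes in Filter.cofinite, ‖(a + b) p‖ ≤ 1
    filter_upwards [ha, hb] with p hpa hpb
    exact le_trans (Padic.nonarchimedean _ _) (max_le hpa hpb)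
  neg_mem' := by
    intro a ha
    show ∀ᶠ p : Nat.Primes in Filter.cofinite, ‖(-a) p‖ ≤ 1
    filter_upwards [ha] with p hp
    simpa using hp
  mul_mem' := by
    intro a b ha hb
    show ∀ᶠ p : Nat.Primes in Filter.cofinite, ‖(a * b) p‖ ≤ 1
    filter_upwards [ha, hb] with p hpa hpb
    have h : ‖(a * b) p‖ = ‖a p‖ * ‖b p‖ := norm_mul _ _
    rw [h]
    nlinarith [norm_nonneg (a p), norm_nonneg (b p)]

/-- The finite adele ring `𝔸_f` as a type. -/
abbrev FA : Type := ↥adeleSubring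

/-- `‖x‖₁ = sup_p |x_p|_p`. -/
def norm1 (x : FA) : ℝ := ⨆ p : Nat.Primes, ‖x.1 p‖

/-- `‖x‖₀ = sup_p |x_p|_p / p`. -/
def norm0 (x : FA) : ℝ := ⨆ p : Nat.Primes, ‖x.1 p‖ / p

/-- The adelic norm `‖x‖`. -/
def anorm (x : FA) : ℝ := if ∀ p, ‖x.1 p‖ ≤ 1 then norm0 x else norm1 x

/-- The restricted product topology on `𝔸_f`. -/
def restrictedTop : TopologicalSpace FA :=
  TopologicalSpace.generateFrom
    { B | ∃ (S : Finset Nat.Primes) (U : Π p : Nat.Primes, Set ℚ_[p.1]),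
        (∀ p, IsOpen (U p)) ∧
        B = {x : FA | (∀ p ∈ S, x.1 p ∈ U p) ∧ ∀ p ∉ S, ‖x.1 p‖ ≤ 1} }

end


section AdeleAux

lemma one_le_pR (p : Nat.Primes) : (1:ℝ) ≤ (p : ℕ) := by
  exact_mod_cast p.2.one_lt.le

lemma pR_pos (p : Nat.Primes) : (0:ℝ) < (p : ℕ) :=
  lt_of_lt_of_le one_pos (one_le_pR p)

lemma finite_not_le (x : FA) : {p : Nat.Primes | ¬ ‖x.1 p‖ ≤ 1}.Finite :=
  Filter.eventually_cofinite.mp x.2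

lemma bdd1 (x : FA) : BddAbove (Set.range fun p : Nat.Primes => ‖x.1 p‖) := by
  classical
  refine ⟨1 + ∑ p ∈ (finite_not_le x).toFinset, ‖x.1 p‖, ?_⟩
  rintro r ⟨q, rfl⟩
  by_cases hq : ‖x.1 q‖ ≤ 1
  · have : (0:ℝ) ≤ ∑ p ∈ (finite_not_le x).toFinset, ‖x.1 p‖ :=
      Finset.sum_nonneg fun p _ => norm_nonneg _
    linarith
  · have hqmem : q ∈ (finite_not_le x).toFinset := by
      simpa [Set.Finite.mem_toFinset] using hq
    have := Finset.single_le_sum (f := fun p : Nat.Primes => ‖x.1 p‖)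
      (fun p _ => norm_nonneg _) hqmem
    linarith

lemma bdd0 (x : FA) : BddAbove (Set.range fun p : Nat.Primes => ‖x.1 p‖ / p) := by
  obtain ⟨M, hM⟩ := bdd1 x
  refine ⟨M, ?_⟩
  rintro r ⟨q, rfl⟩
  exact le_trans (div_le_self (norm_nonneg _) (one_le_pR q)) (hM ⟨q, rfl⟩)

lemma le_norm1 (x : FA) (q : Nat.Primes) : ‖x.1 q‖ ≤ norm1 x :=
  le_ciSup (bdd1 x) q

lemma le_norm0 (x : FA) (q : Nat.Primes) : ‖x.1 q‖ / q ≤ norm0 x :=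
  le_ciSup (bdd0 x) q

lemma norm1_nonneg (x : FA) : 0 ≤ norm1 x :=
  le_trans (norm_nonneg _) (le_norm1 x ⟨2, Nat.prime_two⟩)

lemma norm0_nonneg (x : FA) : 0 ≤ norm0 x :=
  le_trans (div_nonneg (norm_nonneg _) (pR_pos ⟨2, Nat.prime_two⟩).le)
    (le_norm0 x ⟨2, Nat.prime_two⟩)

lemma anorm_nonneg (x : FA) : 0 ≤ anorm x := by
  unfold anorm; split <;> [exact norm0_nonneg x; exact norm1_nonneg x]

lemma anorm_neg (x : FA) : anorm (-x) = anorm x := by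
  have h : ∀ p : Nat.Primes, ‖(-x).1 p‖ = ‖x.1 p‖ := fun p => norm_neg (x.1 p)
  unfold anorm norm0 norm1
  simp only [h]

lemma anorm_zero : anorm (0 : FA) = 0 := by
  have h : ∀ p : Nat.Primes, ‖(0 : FA).1 p‖ = 0 := fun p => norm_zero
  unfold anorm norm0
  rw [if_pos (fun p => by rw [h p]; norm_num)]
  simp only [h, zero_div]
  exact ciSup_const

lemma anorm_eq_zero {x : FA} (hx : anorm x = 0) : x = 0 := by
  by_cases h : ∀ p, ‖x.1 p‖ ≤ 1
  · rw [anorm, if_pos h] at hx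
    have : ∀ p : Nat.Primes, x.1 p = 0 := by
      intro p
      have h1 : ‖x.1 p‖ / p ≤ 0 := hx ▸ le_norm0 x p
      have h2 : 0 ≤ ‖x.1 p‖ / p := div_nonneg (norm_nonneg _) (pR_pos p).le
      have : ‖x.1 p‖ / p = 0 := le_antisymm h1 h2
      have := (div_eq_zero_iff.mp this).resolve_right (pR_pos p).ne'
      simpa using this
    ext p
    exact this p
  · exfalso
    push_neg at h
    obtain ⟨q, hq⟩ := h
    rw [anorm, if_neg (by push_neg; exact ⟨q, hq⟩)] at hx
    have := le_norm1 x q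
    rw [hx] at this
    linarith

end AdeleAux

section AdeleAux2

lemma norm1_add_le (x y : FA) : norm1 (x + y) ≤ max (norm1 x) (norm1 y) := by
  refine ciSup_le fun p => ?_
  have h : ‖(x + y).1 p‖ ≤ max ‖x.1 p‖ ‖y.1 p‖ := Padic.nonarchimedean _ _
  exact le_trans h (max_le_max (le_norm1 x p) (le_norm1 y p))

lemma norm0_add_le (x y : FA) : norm0 (x + y) ≤ max (norm0 x) (norm0 y) := by
  refine ciSup_le fun p => ?_
  have h : ‖(x + y).1 p‖ ≤ max ‖x.1 p‖ ‖y.1 p‖ := Padic.nonarchimedean _ _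
  calc ‖(x + y).1 p‖ / p ≤ max ‖x.1 p‖ ‖y.1 p‖ / p := (div_le_div_iff_of_pos_right (pR_pos p)).mpr h
    _ = max (‖x.1 p‖ / p) (‖y.1 p‖ / p) := (max_div_div_right (pR_pos p).le _ _).symm
    _ ≤ max (norm0 x) (norm0 y) := max_le_max (le_norm0 x p) (le_norm0 y p)

lemma norm1_le_one {x : FA} (h : ∀ p, ‖x.1 p‖ ≤ 1) : norm1 x ≤ 1 :=
  ciSup_le h

lemma norm0_le_one {x : FA} (h : ∀ p, ‖x.1 p‖ ≤ 1) : norm0 x ≤ 1 :=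
  ciSup_le fun p => (div_le_one (pR_pos p)).mpr (le_trans (h p) (one_le_pR p))

lemma anorm_add_le (x y : FA) : anorm (x + y) ≤ max (anorm x) (anorm y) := by
  by_cases hx : ∀ p, ‖x.1 p‖ ≤ 1 <;> by_cases hy : ∀ p, ‖y.1 p‖ ≤ 1
  · have hxy : ∀ p, ‖(x + y).1 p‖ ≤ 1 := fun p =>
      le_trans (Padic.nonarchimedean _ _) (max_le (hx p) (hy p))
    rw [show anorm (x + y) = norm0 (x + y) from if_pos hxy,
      show anorm x = norm0 x from if_pos hx, show anorm y = norm0 y from if_pos hy]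
    exact norm0_add_le x y
  · push_neg at hy; obtain ⟨q, hq⟩ := hy
    have h1y : 1 < norm1 y := lt_of_lt_of_le hq (le_norm1 y q)
    rw [show anorm x = norm0 x from if_pos hx, show anorm y = norm1 y from if_neg (by push_neg; exact ⟨q, hq⟩)]
    by_cases hxy : ∀ p, ‖(x + y).1 p‖ ≤ 1
    · rw [show anorm (x + y) = norm0 (x + y) from if_pos hxy]
      exact le_trans (le_trans (norm0_le_one hxy) h1y.le) (le_max_right _ _)
    · rw [show anorm (x + y) = norm1 (x + y) from if_neg hxy]
      refine le_trans (norm1_add_le x y) (max_le ?_ (le_max_right _ _))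
      exact le_trans (le_trans (norm1_le_one hx) h1y.le) (le_max_right _ _)
  · push_neg at hx; obtain ⟨q, hq⟩ := hx
    have h1x : 1 < norm1 x := lt_of_lt_of_le hq (le_norm1 x q)
    rw [show anorm y = norm0 y from if_pos hy, show anorm x = norm1 x from if_neg (by push_neg; exact ⟨q, hq⟩)]
    by_cases hxy : ∀ p, ‖(x + y).1 p‖ ≤ 1
    · rw [show anorm (x + y) = norm0 (x + y) from if_pos hxy]
      exact le_trans (le_trans (norm0_le_one hxy) h1x.le) (le_max_left _ _)
    · rw [show anorm (x + y) = norm1 (x + y) from if_neg hxy]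
      refine le_trans (norm1_add_le x y) (max_le (le_max_left _ _) ?_)
      exact le_trans (le_trans (norm1_le_one hy) h1x.le) (le_max_left _ _)
  · rw [show anorm x = norm1 x from if_neg hx, show anorm y = norm1 y from if_neg hy]
    by_cases hxy : ∀ p, ‖(x + y).1 p‖ ≤ 1
    · rw [show anorm (x + y) = norm0 (x + y) from if_pos hxy]
      push_neg at hx; obtain ⟨q, hq⟩ := hx
      exact le_trans (le_trans (norm0_le_one hxy)
        (lt_of_lt_of_le hq (le_norm1 x q)).le) (le_max_left _ _)
    · rw [show anorm (x + y) = norm1 (x + y) from if_neg hxy]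
      exact norm1_add_le x y

end AdeleAux2

section AdeleAux3

lemma finite_primes_lt (C : ℝ) : {p : Nat.Primes | ((p : ℕ) : ℝ) < C}.Finite := by
  have hsub : {p : Nat.Primes | ((p : ℕ) : ℝ) < C} ⊆
      (fun p : Nat.Primes => (p : ℕ)) ⁻¹' (Set.Iio ⌈C⌉₊) := by
    intro p hp
    simp only [Set.mem_preimage, Set.mem_Iio]
    exact Nat.lt_ceil.mpr hp
  exact Set.Finite.subset (Set.Finite.preimage Subtype.val_injective.injOn
    (Set.finite_Iio _)) hsub

lemma padic_norm_le_one_of_lt_p {p : ℕ} [hp : Fact p.Prime] {z : ℚ_[p]}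
    (h : ‖z‖ < p) : ‖z‖ ≤ 1 := by
  have := (Padic.norm_le_pow_iff_norm_lt_pow_add_one z 0).2
  simp only [zpow_zero, zero_add, zpow_one] at this
  exact this h

lemma anorm_lt_iff (x : FA) {ε : ℝ} (hε : 0 < ε) (hε1 : ε ≤ 1) :
    anorm x < ε ↔ (∀ p, ‖x.1 p‖ ≤ 1) ∧ ∀ p : Nat.Primes, ‖x.1 p‖ < ε * p := by
  constructor
  · intro h
    by_cases hx : ∀ p, ‖x.1 p‖ ≤ 1
    · refine ⟨hx, fun p => ?_⟩
      rw [anorm, if_pos hx] at h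
      have := lt_of_le_of_lt (le_norm0 x p) h
      rw [div_lt_iff₀ (pR_pos p)] at this
      linarith [this]
    · exfalso
      rw [anorm, if_neg hx] at h
      push_neg at hx
      obtain ⟨q, hq⟩ := hx
      have := le_norm1 x q
      linarith
  · rintro ⟨hx, hlt⟩
    rw [anorm, if_pos hx]
    classical
    set T : Finset Nat.Primes := (finite_primes_lt (2 / ε)).toFinset with hT
    have hterm : ∀ p : Nat.Primes, p ∉ T → ‖x.1 p‖ / p ≤ ε / 2 := by
      intro p hp
      have hge : 2 / ε ≤ (p : ℕ) := by
        by_contra hcon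
        exact hp ((finite_primes_lt (2 / ε)).mem_toFinset.mpr (lt_of_not_ge hcon))
      have h2 : (2:ℝ) ≤ ε * p := by
        rw [div_le_iff₀ hε] at hge
        linarith
      rw [div_le_iff₀ (pR_pos p)]
      calc ‖x.1 p‖ ≤ 1 := hx p
        _ ≤ ε / 2 * p := by nlinarith
    by_cases hTne : T.Nonempty
    · have hm : T.sup' hTne (fun p => ‖x.1 p‖ / p) < ε := by
        rw [Finset.sup'_lt_iff]
        intro p _
        rw [div_lt_iff₀ (pR_pos p)]
        exact hlt p
      have : norm0 x ≤ max (T.sup' hTne (fun p => ‖x.1 p‖ / p)) (ε / 2) := by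
        refine ciSup_le fun p => ?_
        by_cases hp : p ∈ T
        · exact le_max_of_le_left (Finset.le_sup' (fun p : Nat.Primes => ‖x.1 p‖ / p) hp)
        · exact le_max_of_le_right (hterm p hp)
      exact lt_of_le_of_lt this (max_lt hm (by linarith))
    · have : norm0 x ≤ ε / 2 := by
        refine ciSup_le fun p => ?_
        exact hterm p (fun hp => hTne ⟨p, hp⟩)
      linarith

end AdeleAux3

section AdeleAux4

lemma FA_sub_apply (x y : FA) (p : Nat.Primes) : (x - y).1 p = x.1 p - y.1 p := rfl

lemma key_topology (s : Set FA) : @IsOpen FA restrictedTop s ↔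
    ∀ x ∈ s, ∃ ε > 0, ∀ y : FA, anorm (x - y) < ε → y ∈ s := by
  constructor
  · intro hs
    have hs' : TopologicalSpace.GenerateOpen
        { B | ∃ (S : Finset Nat.Primes) (U : Π p : Nat.Primes, Set ℚ_[p.1]),
          (∀ p, IsOpen (U p)) ∧
          B = {x : FA | (∀ p ∈ S, x.1 p ∈ U p) ∧ ∀ p ∉ S, ‖x.1 p‖ ≤ 1} } s := hs
    clear hs
    induction hs' with
    | basic B hB =>
      obtain ⟨S, U, hU, rfl⟩ := hB
      intro x hx
      have hδ : ∀ p : Nat.Primes, ∃ δ : ℝ, 0 < δ ∧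
          (p ∈ S → Metric.ball (x.1 p) δ ⊆ U p) := by
        intro p
        by_cases hp : p ∈ S
        · obtain ⟨δ, hδpos, hδ⟩ := Metric.isOpen_iff.mp (hU p) (x.1 p) (hx.1 p hp)
          exact ⟨δ, hδpos, fun _ => hδ⟩
        · exact ⟨1, one_pos, fun h => absurd h hp⟩
      choose δ hδpos hδball using hδ
      classical
      set F : Finset ℝ := insert (1:ℝ) (S.image fun p => δ p / p) with hF
      have hne : F.Nonempty := ⟨1, Finset.mem_insert_self _ _⟩
      set ε := F.min' hne with hεdef
      have hpos : ∀ a ∈ F, (0:ℝ) < a := by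
        intro a ha
        rcases Finset.mem_insert.mp ha with rfl | ha
        · exact one_pos
        · obtain ⟨p, hp, rfl⟩ := Finset.mem_image.mp ha
          exact div_pos (hδpos p) (pR_pos p)
      have hεpos : 0 < ε := hpos _ (F.min'_mem hne)
      have hε1 : ε ≤ 1 := F.min'_le 1 (Finset.mem_insert_self _ _)
      have hεp : ∀ p ∈ S, ε * p ≤ δ p := by
        intro p hp
        have h := F.min'_le (δ p / p)
          (Finset.mem_insert_of_mem (Finset.mem_image_of_mem _ hp))
        rw [le_div_iff₀ (pR_pos p)] at h
        exact h
      refine ⟨ε, hεpos, fun y hy => ?_⟩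
      obtain ⟨h1, h2⟩ := (anorm_lt_iff (x - y) hεpos hε1).mp hy
      refine ⟨fun p hp => ?_, fun p hp => ?_⟩
      · apply hδball p hp
        rw [Metric.mem_ball, dist_eq_norm, norm_sub_rev]
        have := h2 p
        rw [FA_sub_apply] at this
        exact lt_of_lt_of_le this (hεp p hp)
      · have hxp : ‖x.1 p‖ ≤ 1 := hx.2 p hp
        have hd : ‖x.1 p - y.1 p‖ ≤ 1 := by
          have := h1 p; rwa [FA_sub_apply] at this
        have heq : y.1 p = x.1 p + -(x.1 p - y.1 p) := by ring
        rw [heq]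
        exact le_trans (Padic.nonarchimedean _ _)
          (max_le hxp (by rwa [norm_neg]))
    | univ => exact fun x _ => ⟨1, one_pos, fun y _ => trivial⟩
    | inter u v hu hv ihu ihv =>
      intro x hx
      obtain ⟨ε₁, hp1, hb1⟩ := ihu x hx.1
      obtain ⟨ε₂, hp2, hb2⟩ := ihv x hx.2
      exact ⟨min ε₁ ε₂, lt_min hp1 hp2, fun y hy =>
        ⟨hb1 y (lt_of_lt_of_le hy (min_le_left _ _)),
         hb2 y (lt_of_lt_of_le hy (min_le_right _ _))⟩⟩
    | sUnion SS hSS ih =>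
      intro x hx
      obtain ⟨t, htS, hxt⟩ := hx
      obtain ⟨ε, hε, hb⟩ := ih t htS x hxt
      exact ⟨ε, hε, fun y hy => ⟨t, htS, hb y hy⟩⟩
  · intro h
    letI : TopologicalSpace FA := restrictedTop
    show IsOpen s
    rw [isOpen_iff_forall_mem_open]
    intro x hx
    obtain ⟨ε, hεpos, hball⟩ := h x hx
    set ε' := min ε 1 with hε'def
    have hε'pos : 0 < ε' := lt_min hεpos one_pos
    have hε'1 : ε' ≤ 1 := min_le_right _ _
    classical
    set S : Finset Nat.Primes :=
      ((finite_not_le x).union (finite_primes_lt (2 / ε'))).toFinset with hSdef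
    have hS : ∀ p : Nat.Primes, p ∉ S → ‖x.1 p‖ ≤ 1 ∧ 2 / ε' ≤ (p : ℕ) := by
      intro p hp
      rw [hSdef, Set.Finite.mem_toFinset, Set.mem_union] at hp
      constructor
      · by_contra hc
        exact hp (Or.inl hc)
      · by_contra hc
        exact hp (Or.inr (lt_of_not_ge hc))
    set U : Π p : Nat.Primes, Set ℚ_[p.1] :=
      fun p => Metric.ball (x.1 p) (min (ε' * p) p) with hUdef
    refine ⟨{y : FA | (∀ p ∈ S, y.1 p ∈ U p) ∧ ∀ p ∉ S, ‖y.1 p‖ ≤ 1}, ?_, ?_, ?_⟩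
    · intro y hy
      apply hball
      have : anorm (x - y) < ε' := by
        rw [anorm_lt_iff _ hε'pos hε'1]
        have main : ∀ p : Nat.Primes, ‖(x - y).1 p‖ ≤ 1 ∧ ‖(x - y).1 p‖ < ε' * p := by
          intro p
          rw [FA_sub_apply]
          by_cases hp : p ∈ S
          · have := hy.1 p hp
            rw [hUdef, Metric.mem_ball, dist_eq_norm] at this
            rw [norm_sub_rev]
            exact ⟨padic_norm_le_one_of_lt_p (lt_of_lt_of_le this (min_le_right _ _)),
              lt_of_lt_of_le this (min_le_left _ _)⟩
          · obtain ⟨hx1, hp2⟩ := hS p hp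
            have hy1 : ‖y.1 p‖ ≤ 1 := hy.2 p hp
            have hd : ‖x.1 p - y.1 p‖ ≤ 1 := by
              have heq : x.1 p - y.1 p = x.1 p + -(y.1 p) := by ring
              rw [heq]
              exact le_trans (Padic.nonarchimedean _ _)
                (max_le hx1 (by rwa [norm_neg]))
            have h2 : (2:ℝ) ≤ ε' * p := by
              rw [div_le_iff₀ hε'pos] at hp2
              linarith
            exact ⟨hd, lt_of_le_of_lt hd (by linarith)⟩
        exact ⟨fun p => (main p).1, fun p => (main p).2⟩
      exact lt_of_lt_of_le this (min_le_left _ _)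
    · exact TopologicalSpace.GenerateOpen.basic _
        ⟨S, U, fun p => Metric.isOpen_ball, rfl⟩
    · refine ⟨fun p hp => ?_, fun p hp => (hS p hp).1⟩
      rw [hUdef]
      simp only [Metric.mem_ball, dist_self]
      exact lt_min (mul_pos hε'pos (pR_pos p)) (pR_pos p)

end AdeleAux4

/-- The adelic metric `ρ(x,y) = ‖x − y‖` induces the restricted product topology on `𝔸_f`,
and `(𝔸_f, ρ)` is a complete non-Archimedean metric space. -/
theorem stmt_7 :
    ∃ m : MetricSpace FA,
      (∀ x y : FA, m.toDist.dist x y = anorm (x - y)) ∧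
      m.toUniformSpace.toTopologicalSpace = restrictedTop ∧
      (@CompleteSpace FA m.toUniformSpace) ∧
      (∀ x y z : FA, m.toDist.dist x z ≤ max (m.toDist.dist x y) (m.toDist.dist y z)) := by
  classical
  letI : TopologicalSpace FA := restrictedTop
  have hdistself : ∀ x : FA, anorm (x - x) = 0 := fun x => by
    rw [sub_self]; exact anorm_zero
  have hdistcomm : ∀ x y : FA, anorm (x - y) = anorm (y - x) := fun x y => by
    rw [← anorm_neg (x - y), neg_sub]
  have hultra : ∀ x y z : FA, anorm (x - z) ≤ max (anorm (x - y)) (anorm (y - z)) := by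
    intro x y z
    have := anorm_add_le (x - y) (y - z)
    rwa [sub_add_sub_cancel] at this
  have htri : ∀ x y z : FA, anorm (x - z) ≤ anorm (x - y) + anorm (y - z) := by
    intro x y z
    refine le_trans (hultra x y z) (max_le ?_ ?_)
    · linarith [anorm_nonneg (y - z)]
    · linarith [anorm_nonneg (x - y)]
  set m : MetricSpace FA := MetricSpace.ofDistTopology (fun x y => anorm (x - y))
    hdistself hdistcomm htri key_topology
    (fun x y h => sub_eq_zero.mp (anorm_eq_zero h)) with hm
  have hdist : ∀ a b : FA, m.toDist.dist a b = anorm (a - b) := fun _ _ => rfl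
  refine ⟨m, hdist, rfl, ?_, fun x y z => by
    rw [hdist, hdist, hdist]; exact hultra x y z⟩
  letI := m
  refine Metric.complete_of_cauchySeq_tendsto ?_
  intro u hu
  rw [Metric.cauchySeq_iff] at hu
  have hcoord : ∀ p : Nat.Primes,
      ∃ l : ℚ_[p.1], Filter.Tendsto (fun n => (u n).1 p) atTop (nhds l) := by
    intro p
    apply cauchySeq_tendsto_of_complete
    rw [Metric.cauchySeq_iff]
    intro δ hδ
    have hε : 0 < min (δ / (p:ℕ)) 1 / 2 := by
      have := pR_pos p; positivity
    obtain ⟨N, hN⟩ := hu _ hε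
    refine ⟨N, fun a ha b hb => ?_⟩
    have h := hN a ha b hb
    rw [hdist] at h
    have hle1 : min (δ / (p:ℕ)) 1 / 2 ≤ 1 := by
      have : min (δ / ((p:ℕ):ℝ)) 1 ≤ 1 := min_le_right _ _
      linarith
    obtain ⟨_, h2⟩ := (anorm_lt_iff _ hε hle1).mp h
    have hb2 := h2 p
    rw [FA_sub_apply] at hb2
    rw [dist_eq_norm]
    have hcalc : δ / ((p:ℕ):ℝ) / 2 * ((p:ℕ):ℝ) = δ / 2 := by
      have hp0 : ((p:ℕ):ℝ) ≠ 0 := (pR_pos p).ne'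
      field_simp
    have hmin : min (δ / ((p:ℕ):ℝ)) 1 / 2 * ((p:ℕ):ℝ) ≤ δ / 2 := by
      rw [← hcalc]
      refine mul_le_mul_of_nonneg_right ?_ (pR_pos p).le
      have : min (δ / ((p:ℕ):ℝ)) 1 ≤ δ / ((p:ℕ):ℝ) := min_le_left _ _
      linarith
    calc ‖(u a).1 p - (u b).1 p‖ < min (δ / ((p:ℕ):ℝ)) 1 / 2 * ((p:ℕ):ℝ) := hb2
      _ ≤ δ / 2 := hmin
      _ < δ := by linarith
  choose Y hY using hcoord
  obtain ⟨N₀, hN₀⟩ := hu 1 one_pos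
  have hmem : Y ∈ adeleSubring := by
    have hev := (u N₀).2
    show ∀ᶠ p : Nat.Primes in Filter.cofinite, ‖Y p‖ ≤ 1
    filter_upwards [hev] with p hp
    refine le_of_tendsto ((hY p).norm) ?_
    filter_upwards [eventually_ge_atTop N₀] with n hn
    have h := hN₀ n hn N₀ (le_refl N₀)
    rw [hdist] at h
    obtain ⟨h1, _⟩ := (anorm_lt_iff _ one_pos le_rfl).mp h
    have hd := h1 p
    rw [FA_sub_apply] at hd
    have heq : (u n).1 p = ((u n).1 p - (u N₀).1 p) + (u N₀).1 p := by ring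
    rw [heq]
    exact le_trans (Padic.nonarchimedean _ _) (max_le hd hp)
  refine ⟨⟨Y, hmem⟩, ?_⟩
  rw [Metric.tendsto_atTop]
  intro ε hε
  set ε' := min ε 1 with hε'def
  have hε'pos : 0 < ε' := lt_min hε one_pos
  have hε'1 : ε' ≤ 1 := min_le_right _ _
  obtain ⟨N, hN⟩ := hu (ε' / 2) (by positivity)
  refine ⟨N, fun n hn => ?_⟩
  have hkey : anorm (u n - ⟨Y, hmem⟩) < ε' := by
    rw [anorm_lt_iff _ hε'pos hε'1]
    have main : ∀ p : Nat.Primes,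
        ‖(u n - (⟨Y, hmem⟩ : FA)).1 p‖ ≤ 1 ∧
        ‖(u n - (⟨Y, hmem⟩ : FA)).1 p‖ < ε' * p := by
      intro p
      rw [FA_sub_apply]
      have htend : Filter.Tendsto (fun m => ‖(u n).1 p - (u m).1 p‖) atTop
          (nhds ‖(u n).1 p - Y p‖) := (tendsto_const_nhds.sub (hY p)).norm
      have hev2 : ∀ᶠ m in atTop,
          ‖(u n).1 p - (u m).1 p‖ ≤ 1 ∧ ‖(u n).1 p - (u m).1 p‖ ≤ ε' / 2 * p := by
        filter_upwards [eventually_ge_atTop N] with m hm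
        have h := hN n hn m hm
        rw [hdist] at h
        obtain ⟨h1, h2⟩ := (anorm_lt_iff _ (by positivity) (by linarith)).mp h
        have ha := h1 p
        have hb := h2 p
        rw [FA_sub_apply] at ha hb
        exact ⟨ha, hb.le⟩
      refine ⟨le_of_tendsto htend (hev2.mono fun m hm => hm.1), ?_⟩
      have hle : ‖(u n).1 p - Y p‖ ≤ ε' / 2 * p :=
        le_of_tendsto htend (hev2.mono fun m hm => hm.2)
      have hlt : ε' / 2 * ((p:ℕ):ℝ) < ε' * ((p:ℕ):ℝ) := by
        have := pR_pos p
        nlinarith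
      linarith
    exact ⟨fun p => (main p).1, fun p => (main p).2⟩
  calc dist (u n) (⟨Y, hmem⟩ : FA) = anorm (u n - ⟨Y, hmem⟩) := hdist _ _
    _ < ε' := hkey
    _ ≤ ε := min_le_left _ _
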